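/- Let S ⊆ [n] and i ∉ S. Then the rational function (Σ_{j ∉ S ∪ {i}} P_S^{i,j} X_j + Σ_{j ∈ S ∪ {i}} P_S^{i,j} A_j) / Y_{S ⊖ i} (which equals X_i · Y_{S ⊕ i}) lies in the subring of ℚ(A_1,…,A_n,X_1,…,X_n) generated over ℤ by the X_j (j ∈ [n]), the A_j (j ∈ [n]), and the elements Y_T for subsets T ⊆ S; that is, it can be written as a polynomial with integer coefficients in the X_j, the A_j, and the Y_T with T ⊆ S. -/

import Mathlib

open MvPolynomial

/-- Reachability inside a subset `U` of vertices, along edges of `E`. -/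
def ReachIn {n : ℕ} (E : Fin n → Fin n → Prop) (U : Finset (Fin n)) (a b : Fin n) : Prop :=
  Relation.ReflTransGen (fun x y => E x y ∧ x ∈ U ∧ y ∈ U) a b

/-- A nonempty subset `I` is strongly connected if any vertex of `I` can reach any
other vertex of `I` by a directed path staying inside `I`. -/
def StronglyConnected {n : ℕ} (E : Fin n → Fin n → Prop) (I : Finset (Fin n)) : Prop :=
  I.Nonempty ∧ ∀ a ∈ I, ∀ b ∈ I, ReachIn E I a b

open Classical in
/-- The strongly connected component of `x` in the induced subgraph on `U`. -/
noncomputable def scc {n : ℕ} (E : Fin n → Fin n → Prop) (U : Finset (Fin n)) (x : Fin n) :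
    Finset (Fin n) :=
  U.filter fun y => ReachIn E U x y ∧ ReachIn E U y x

/-- `S ⊕ j` : the strongly connected component of `S ∪ {j}` containing `j`. -/
noncomputable def oplus {n : ℕ} (E : Fin n → Fin n → Prop) (S : Finset (Fin n)) (j : Fin n) :
    Finset (Fin n) :=
  scc E (insert j S) j

/-- `S ⊖ j = (S ∪ {j}) − (S ⊕ j)`. -/
noncomputable def ominus {n : ℕ} (E : Fin n → Fin n → Prop) (S : Finset (Fin n)) (j : Fin n) :
    Finset (Fin n) :=
  insert j S \ oplus E S j

/-- A family of strongly connected subsets is nested if any two members are nested or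
disjoint, and any tuple of pairwise disjoint members are exactly the strongly connected
components of their union. -/
def Nested {n : ℕ} (E : Fin n → Fin n → Prop) (𝒮 : Finset (Finset (Fin n))) : Prop :=
  (∀ I ∈ 𝒮, StronglyConnected E I) ∧
  (∀ I ∈ 𝒮, ∀ J ∈ 𝒮, I ⊆ J ∨ J ⊆ I ∨ Disjoint I J) ∧
  (∀ 𝒯 ⊆ 𝒮, (∀ I ∈ 𝒯, ∀ J ∈ 𝒯, I ≠ J → Disjoint I J) →
    ∀ I ∈ 𝒯, ∀ x ∈ I, scc E (𝒯.sup id) x = I)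

/-- The support of a collection: the union of its members. -/
def nsupport {n : ℕ} (𝒮 : Finset (Finset (Fin n))) : Finset (Fin n) := 𝒮.sup id

/-- A nested collection is maximal (for its support) if the only nested collection with the
same support containing it is itself. -/
def MaximalNested {n : ℕ} (E : Fin n → Fin n → Prop) (𝒮 : Finset (Finset (Fin n))) : Prop :=
  Nested E 𝒮 ∧ ∀ 𝒮' : Finset (Finset (Fin n)),
    Nested E 𝒮' → nsupport 𝒮' = nsupport 𝒮 → 𝒮 ⊆ 𝒮' → 𝒮' = 𝒮

/-- The ambient field: rational functions in the indeterminates `A_1,…,A_n,X_1,…,X_n`. -/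
abbrev Kn (n : ℕ) : Type := FractionRing (MvPolynomial (Fin n ⊕ Fin n) ℤ)

/-- The coefficient `A_i`, as an element of the ambient field. -/
noncomputable def AA {n : ℕ} (i : Fin n) : Kn n :=
  algebraMap (MvPolynomial (Fin n ⊕ Fin n) ℤ) (Kn n) (X (Sum.inl i))

/-- The initial cluster variable `X_i`, as an element of the ambient field. -/
noncomputable def XX {n : ℕ} (i : Fin n) : Kn n :=
  algebraMap (MvPolynomial (Fin n ⊕ Fin n) ℤ) (Kn n) (X (Sum.inr i))

/-- `f` is acyclic on `I`: the only directed cycles in the graph `{i → f(i) : i ∈ I}`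
are loops at fixed points. -/
def IsAcyclicOn {n : ℕ} (I : Finset (Fin n)) (f : Fin n → Fin n) : Prop :=
  ∀ i ∈ I, ∀ k : ℕ, 0 < k → (∀ r < k, f^[r] i ∈ I) → f^[k] i = i → f i = i

open Classical in
/-- The numerator `N_I` of `Y_I`: the generating function of acyclic functions `f : I → [n]`
(encoded as functions `Fin n → Fin n` fixing every vertex outside `I`), where a fixed point
`i ∈ I` contributes `A_i` and a non-fixed point contributes `X_{f i}`. -/
noncomputable def Ynum {n : ℕ} (E : Fin n → Fin n → Prop) (I : Finset (Fin n)) :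
    MvPolynomial (Fin n ⊕ Fin n) ℤ :=
  ∑ f : Fin n → Fin n,
    if (∀ i, i ∉ I → f i = i) ∧ (∀ i ∈ I, f i = i ∨ E i (f i)) ∧ IsAcyclicOn I f then
      ∏ i ∈ I, if f i = i then X (Sum.inl i) else X (Sum.inr (f i))
    else 0

/-- The Laurent polynomial `Y_I` (with `Y_∅ = 1`). -/
noncomputable def YY {n : ℕ} (E : Fin n → Fin n → Prop) (I : Finset (Fin n)) : Kn n :=
  algebraMap (MvPolynomial (Fin n ⊕ Fin n) ℤ) (Kn n) (Ynum E I) / ∏ i ∈ I, XX i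

open Classical in
/-- `P_S^{i,j}`: the sum of `Y_{S − p}` over all simple paths `p : i →_S j` in the graph,
whose intermediate vertices lie in `S`.  A path with `m` edges is encoded as an injective
map `v : Fin (m+1) → Fin n` whose consecutive values are edges. -/
noncomputable def PP {n : ℕ} (E : Fin n → Fin n → Prop) (S : Finset (Fin n)) (i j : Fin n) :
    Kn n :=
  ∑ m ∈ Finset.range (n + 1), ∑ v : Fin (m + 1) → Fin n,
    if Function.Injective v ∧ v 0 = i ∧ v (Fin.last m) = j ∧
        (∀ r : Fin m, E (v r.castSucc) (v r.succ)) ∧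
        (∀ r : Fin (m + 1), r ≠ 0 → r ≠ Fin.last m → v r ∈ S) then
      YY E (S \ Finset.image v Finset.univ)
    else 0

open Classical in
/-- The matrix `𝒴`, with diagonal entries `Y_{{i}}`, entries `−1` at edges of the graph,
and `0` elsewhere. -/
noncomputable def Ymat {n : ℕ} (E : Fin n → Fin n → Prop) : Matrix (Fin n) (Fin n) (Kn n) :=
  Matrix.of fun i j => if i = j then YY E {i} else if E i j then -1 else 0
section Dev
open Classical
variable {n : ℕ} (E : Fin n → Fin n → Prop)

local notation "R" => MvPolynomial (Fin n ⊕ Fin n) ℤ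

/-- condition on `f` in the definition of `Ynum`. -/
def Fcond (I : Finset (Fin n)) (f : Fin n → Fin n) : Prop :=
  (∀ i, i ∉ I → f i = i) ∧ (∀ i ∈ I, f i = i ∨ E i (f i)) ∧ IsAcyclicOn I f

noncomputable def wt (I : Finset (Fin n)) (f : Fin n → Fin n) : R :=
  ∏ i ∈ I, if f i = i then MvPolynomial.X (Sum.inl i) else MvPolynomial.X (Sum.inr (f i))

lemma Ynum_eq (I : Finset (Fin n)) :
    Ynum E I = ∑ f : Fin n → Fin n, if Fcond E I f then wt I f else 0 := by
  unfold Ynum Fcond wt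
  apply Finset.sum_congr rfl
  intro f _
  congr 1

lemma Fcond_id (I : Finset (Fin n)) : Fcond E I id := by
  refine ⟨fun _ _ => rfl, fun i _ => Or.inl rfl, fun i _ k _ _ _ => rfl⟩

lemma Ynum_ne_zero (I : Finset (Fin n)) : Ynum E I ≠ 0 := by
  intro h
  have := congrArg (MvPolynomial.eval (Sum.elim (fun _ => (1:ℤ)) (fun _ => 0))) h
  rw [Ynum_eq, map_zero, map_sum] at this
  rw [Finset.sum_eq_single (id : Fin n → Fin n)] at this
  · rw [if_pos (Fcond_id E I)] at this
    simp [wt] at this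
  · intro f _ hf
    by_cases hc : Fcond E I f
    · rw [if_pos hc]
      have : ∃ i ∈ I, f i ≠ i := by
        by_contra hne
        push_neg at hne
        apply hf
        funext x
        by_cases hx : x ∈ I
        · exact hne x hx
        · exact hc.1 x hx
      obtain ⟨i, hiI, hfi⟩ := this
      rw [wt, map_prod]
      exact Finset.prod_eq_zero hiI (by simp [hfi])
    · simp [hc]
  · simp
end Dev
section Dev2
open Classical MvPolynomial
variable {n : ℕ} (E : Fin n → Fin n → Prop)

local notation "R" => MvPolynomial (Fin n ⊕ Fin n) ℤ
local notation "φ" => algebraMap (MvPolynomial (Fin n ⊕ Fin n) ℤ) (Kn n)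

lemma phi_inj : Function.Injective (algebraMap (MvPolynomial (Fin n ⊕ Fin n) ℤ) (Kn n)) :=
  IsFractionRing.injective _ _

lemma phi_ne_zero {p : MvPolynomial (Fin n ⊕ Fin n) ℤ} (hp : p ≠ 0) : φ p ≠ 0 := by
  intro h
  exact hp (phi_inj (by simpa using h))

lemma XX_ne_zero (i : Fin n) : XX i ≠ 0 :=
  phi_ne_zero (MvPolynomial.X_ne_zero _)

lemma prodXX_ne_zero (I : Finset (Fin n)) : (∏ i ∈ I, XX i) ≠ 0 :=
  Finset.prod_ne_zero_iff.mpr (fun i _ => XX_ne_zero i)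

lemma YY_ne_zero (I : Finset (Fin n)) : YY E I ≠ 0 := by
  rw [YY]
  exact div_ne_zero (phi_ne_zero (Ynum_ne_zero E I)) (prodXX_ne_zero I)

lemma prodXX_eq (I : Finset (Fin n)) :
    (∏ i ∈ I, XX i) = φ (∏ i ∈ I, X (Sum.inr i)) := by
  rw [map_prod]; rfl

end Dev2
section Dev3
open Classical MvPolynomial
variable {n : ℕ} {E : Fin n → Fin n → Prop}

lemma iterate_agree {α : Type*} (f g : α → α) (W : Set α)
    (hagree : ∀ x ∈ W, f x = g x) (x : α) :
    ∀ (k : ℕ), (∀ s, s < k → f^[s] x ∈ W) → f^[k] x = g^[k] x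
  | 0, _ => rfl
  | (k+1), h => by
    have ih := iterate_agree f g W hagree x k (fun s hs => h s (Nat.lt_succ_of_lt hs))
    rw [Function.iterate_succ_apply', Function.iterate_succ_apply', ← ih,
      hagree _ (h k (Nat.lt_succ_self k))]

lemma reachin_of_iterate (W : Finset (Fin n)) (f : Fin n → Fin n)
    (hf : ∀ i ∈ W, f i = i ∨ E i (f i)) (x : Fin n) :
    ∀ (t : ℕ), (∀ s, s ≤ t → f^[s] x ∈ W) → ReachIn E W x (f^[t] x)
  | 0, _ => Relation.ReflTransGen.refl
  | (t+1), h => by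
    have ih := reachin_of_iterate W f hf x t (fun s hs => h s (Nat.le_succ_of_le hs))
    rcases hf (f^[t] x) (h t (Nat.le_succ t)) with heq | hedge
    · rwa [Function.iterate_succ_apply', heq]
    · rw [Function.iterate_succ_apply']
      refine ih.tail ⟨hedge, h t (Nat.le_succ t), ?_⟩
      have := h (t+1) le_rfl
      rwa [Function.iterate_succ_apply'] at this

/-- restriction of a function to a finset, identity elsewhere -/
def restr (U : Finset (Fin n)) (f : Fin n → Fin n) : Fin n → Fin n :=
  fun x => if x ∈ U then f x else x

lemma restr_mem {U : Finset (Fin n)} {f : Fin n → Fin n} {x : Fin n} (hx : x ∈ U) :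
    restr U f x = f x := if_pos hx

lemma restr_not_mem {U : Finset (Fin n)} {f : Fin n → Fin n} {x : Fin n} (hx : x ∉ U) :
    restr U f x = x := if_neg hx

lemma wt_congr {I : Finset (Fin n)} {f g : Fin n → Fin n}
    (h : ∀ i ∈ I, f i = g i) : wt (n := n) I f = wt I g := by
  unfold wt
  exact Finset.prod_congr rfl (fun i hi => by rw [h i hi])

lemma restr_acyclic {U W : Finset (Fin n)} (hUW : U ⊆ W) {f : Fin n → Fin n}
    (hf : IsAcyclicOn W f) : IsAcyclicOn U (restr U f) := by
  intro x hx k hk hin hcyc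
  have hag : ∀ s, s ≤ k → (restr U f)^[s] x = f^[s] x := fun s hs =>
    iterate_agree (restr U f) f (↑U) (fun y hy => restr_mem (by simpa using hy)) x s
      (fun r hr => hin r (lt_of_lt_of_le hr hs))
  have hfk : f^[k] x = x := by rw [← hag k le_rfl]; exact hcyc
  have : f x = x := hf x (hUW hx) k hk
    (fun r hr => hUW (by rw [← hag r (le_of_lt hr)]; exact hin r hr)) hfk
  rw [restr_mem hx]; exact this

lemma Ynum_union (U V : Finset (Fin n)) (hdisj : Disjoint U V)
    (hcross : ∀ x ∈ U, ∀ y ∈ V,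
      ¬(ReachIn E (U ∪ V) x y ∧ ReachIn E (U ∪ V) y x)) :
    Ynum E (U ∪ V) = Ynum E U * Ynum E V := by
  classical
  rw [Ynum_eq, Ynum_eq, Ynum_eq, Finset.sum_mul_sum, ← Finset.sum_product']
  simp only [ite_zero_mul_ite_zero]
  rw [← Finset.sum_filter, ← Finset.sum_filter]
  refine Finset.sum_nbij' (fun f => (restr U f, restr V f))
    (fun p => fun x => if x ∈ U then p.1 x else p.2 x) ?_ ?_ ?_ ?_ ?_
  · -- forward membership
    intro f hf
    rw [Finset.mem_filter] at hf ⊢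
    obtain ⟨-, hfix, hedge, hacy⟩ := hf
    refine ⟨Finset.mem_univ _, ⟨fun x hx => restr_not_mem hx,
        fun x hx => ?_, restr_acyclic Finset.subset_union_left hacy⟩,
      ⟨fun x hx => restr_not_mem hx, fun x hx => ?_,
        restr_acyclic Finset.subset_union_right hacy⟩⟩
    · show restr U f x = x ∨ E x (restr U f x)
      rw [restr_mem hx]; exact hedge x (Finset.mem_union_left _ hx)
    · show restr V f x = x ∨ E x (restr V f x)
      rw [restr_mem hx]; exact hedge x (Finset.mem_union_right _ hx)
  · -- backward membership
    intro p hp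
    rw [Finset.mem_filter] at hp ⊢
    obtain ⟨-, ⟨h1fix, h1edge, h1acy⟩, ⟨h2fix, h2edge, h2acy⟩⟩ := hp
    set g : Fin n → Fin n := (fun x => if x ∈ U then p.1 x else p.2 x) with hg
    have hgU : ∀ x ∈ U, g x = p.1 x := fun x hx => by simp only [hg, if_pos hx]
    have hgV : ∀ x ∈ V, g x = p.2 x := fun x hx => by
      have : x ∉ U := fun hxU => (Finset.disjoint_left.mp hdisj hxU) hx
      simp only [hg, if_neg this]
    have hedge : ∀ i ∈ U ∪ V, g i = i ∨ E i (g i) := by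
      intro x hx
      rcases Finset.mem_union.mp hx with hx | hx
      · rw [hgU x hx]; exact h1edge x hx
      · rw [hgV x hx]; exact h2edge x hx
    refine ⟨Finset.mem_univ _, fun x hx => ?_, hedge, ?_⟩
    · have hxU : x ∉ U := fun h => hx (Finset.mem_union_left _ h)
      have hxV : x ∉ V := fun h => hx (Finset.mem_union_right _ h)
      show g x = x
      simp only [hg, if_neg hxU]
      exact h2fix x hxV
    · -- acyclicity of the glued function
      intro x hx k hk hin hcyc
      show g x = x
      replace hin : ∀ r, r < k → g^[r] x ∈ U ∪ V := hin
      replace hcyc : g^[k] x = x := hcyc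
      by_cases hU : ∀ r, r < k → g^[r] x ∈ U
      · have hag : ∀ s, s ≤ k → g^[s] x = p.1^[s] x := fun s hs =>
          iterate_agree g p.1 (↑U) hgU x s (fun r hr => hU r (lt_of_lt_of_le hr hs))
        have hx0 : x ∈ U := by have := hU 0 hk; simpa using this
        have : p.1 x = x := h1acy x hx0 k hk
          (fun r hr => by rw [← hag r (le_of_lt hr)]; exact hU r hr)
          (by rw [← hag k le_rfl]; exact hcyc)
        rw [hgU x hx0]; exact this
      · by_cases hV : ∀ r, r < k → g^[r] x ∈ V
        · have hag : ∀ s, s ≤ k → g^[s] x = p.2^[s] x := fun s hs =>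
            iterate_agree g p.2 (↑V) hgV x s (fun r hr => hV r (lt_of_lt_of_le hr hs))
          have hx0 : x ∈ V := by have := hV 0 hk; simpa using this
          have : p.2 x = x := h2acy x hx0 k hk
            (fun r hr => by rw [← hag r (le_of_lt hr)]; exact hV r hr)
            (by rw [← hag k le_rfl]; exact hcyc)
          rw [hgV x hx0]; exact this
        · -- mixed cycle: contradiction with hcross
          exfalso
          push_neg at hU hV
          obtain ⟨r2, hr2k, hr2⟩ := hU
          obtain ⟨r1, hr1k, hr1⟩ := hV
          have hmemUV : ∀ r, r ≤ k → g^[r] x ∈ U ∪ V := by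
            intro r hr
            rcases lt_or_eq_of_le hr with hr | hr
            · exact hin r hr
            · rw [hr, hcyc]; exact hx
          have hr1' : g^[r1] x ∈ U := by
            rcases Finset.mem_union.mp (hmemUV r1 (le_of_lt hr1k)) with h | h
            · exact h
            · exact absurd h hr1
          have hr2' : g^[r2] x ∈ V := by
            rcases Finset.mem_union.mp (hmemUV r2 (le_of_lt hr2k)) with h | h
            · exact absurd h hr2
            · exact h
          have hreach : ∀ s t : ℕ, s ≤ t → t ≤ k →
              ReachIn E (U ∪ V) (g^[s] x) (g^[t] x) := by
            intro s t hst htk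
            have := reachin_of_iterate (E := E) (U ∪ V) g hedge (g^[s] x) (t - s)
              (fun u hu => by
                rw [← Function.iterate_add_apply]
                exact hmemUV (u + s) (by omega))
            rwa [← Function.iterate_add_apply, Nat.sub_add_cancel hst] at this
          have hx0 : g^[0] x = x := rfl
          rcases le_or_gt r1 r2 with hle | hlt
          · refine hcross _ hr1' _ hr2' ⟨hreach r1 r2 hle (le_of_lt hr2k), ?_⟩
            have h1 := hreach r2 k (le_of_lt hr2k) le_rfl
            have h2 := hreach 0 r1 (Nat.zero_le _) (le_of_lt hr1k)
            rw [hcyc] at h1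
            rw [hx0] at h2
            exact h1.trans h2
          · refine hcross _ hr1' _ hr2' ⟨?_, hreach r2 r1 (le_of_lt hlt) (le_of_lt hr1k)⟩
            have h1 := hreach r1 k (le_of_lt hr1k) le_rfl
            have h2 := hreach 0 r2 (Nat.zero_le _) (le_of_lt hr2k)
            rw [hcyc] at h1
            rw [hx0] at h2
            exact h1.trans h2
  · -- left inverse
    intro f hf
    rw [Finset.mem_filter] at hf
    funext x
    show (if x ∈ U then restr U f x else restr V f x) = f x
    by_cases hx : x ∈ U
    · rw [if_pos hx, restr_mem hx]
    · rw [if_neg hx]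
      by_cases hx' : x ∈ V
      · rw [restr_mem hx']
      · rw [restr_not_mem hx']
        exact (hf.2.1 x (by simp [hx, hx'])).symm
  · -- right inverse
    intro p hp
    rw [Finset.mem_filter] at hp
    refine Prod.ext ?_ ?_ <;> funext x
    · show restr U (fun x => if x ∈ U then p.1 x else p.2 x) x = p.1 x
      by_cases hx : x ∈ U
      · rw [restr_mem hx, if_pos hx]
      · rw [restr_not_mem hx]
        exact (hp.2.1.1 x hx).symm
    · show restr V (fun x => if x ∈ U then p.1 x else p.2 x) x = p.2 x
      by_cases hx : x ∈ V
      · have hxU : x ∉ U := fun h => (Finset.disjoint_left.mp hdisj h) hx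
        rw [restr_mem hx, if_neg hxU]
      · rw [restr_not_mem hx]
        exact (hp.2.2.1 x hx).symm
  · -- weights
    intro f hf
    rw [wt, Finset.prod_union hdisj, ← wt, ← wt]
    rw [wt_congr (f := restr U f) (g := f) (fun i hi => restr_mem hi),
      wt_congr (f := restr V f) (g := f) (fun i hi => restr_mem hi)]

lemma YY_union (U V : Finset (Fin n)) (hdisj : Disjoint U V)
    (hcross : ∀ x ∈ U, ∀ y ∈ V,
      ¬(ReachIn E (U ∪ V) x y ∧ ReachIn E (U ∪ V) y x)) :
    YY E (U ∪ V) = YY E U * YY E V := by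
  rw [YY, YY, YY, Ynum_union U V hdisj hcross, map_mul, Finset.prod_union hdisj]
  rw [div_mul_div_comm]

end Dev3
section Dev4
open Classical
variable {n : ℕ} {E : Fin n → Fin n → Prop}

lemma mem_scc_iff {U : Finset (Fin n)} {x y : Fin n} :
    y ∈ scc E U x ↔ y ∈ U ∧ ReachIn E U x y ∧ ReachIn E U y x := by
  simp [scc]

lemma mem_oplus_self {S : Finset (Fin n)} {i : Fin n} : i ∈ oplus E S i := by
  rw [oplus, mem_scc_iff]
  exact ⟨Finset.mem_insert_self _ _, Relation.ReflTransGen.refl, Relation.ReflTransGen.refl⟩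

lemma oplus_subset {S : Finset (Fin n)} {i : Fin n} : oplus E S i ⊆ insert i S := by
  intro x hx
  rw [oplus, mem_scc_iff] at hx
  exact hx.1

lemma ominus_subset {S : Finset (Fin n)} {i : Fin n} : ominus E S i ⊆ S := by
  intro x hx
  rw [ominus, Finset.mem_sdiff] at hx
  rcases Finset.mem_insert.mp hx.1 with h | h
  · exact absurd (h ▸ mem_oplus_self) hx.2
  · exact h

lemma oplus_union_ominus {S : Finset (Fin n)} {i : Fin n} :
    oplus E S i ∪ ominus E S i = insert i S := by
  rw [ominus, Finset.union_sdiff_self_eq_union]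
  exact Finset.union_eq_right.mpr oplus_subset

lemma oplus_disjoint_ominus {S : Finset (Fin n)} {i : Fin n} :
    Disjoint (oplus E S i) (ominus E S i) := by
  rw [ominus]
  exact Finset.disjoint_sdiff

lemma oplus_cross {S : Finset (Fin n)} {i : Fin n} :
    ∀ x ∈ oplus E S i, ∀ y ∈ ominus E S i,
      ¬(ReachIn E (oplus E S i ∪ ominus E S i) x y ∧
        ReachIn E (oplus E S i ∪ ominus E S i) y x) := by
  intro x hx y hy ⟨hxy, hyx⟩
  rw [oplus_union_ominus] at hxy hyx
  rw [oplus, mem_scc_iff] at hx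
  rw [ominus, Finset.mem_sdiff] at hy
  apply hy.2
  rw [oplus, mem_scc_iff]
  exact ⟨hy.1, hx.2.1.trans hxy, hyx.trans hx.2.2⟩

lemma insert_oplus_erase {S : Finset (Fin n)} {i : Fin n} :
    insert i ((oplus E S i).erase i) = oplus E S i :=
  Finset.insert_erase mem_oplus_self

lemma oplus_erase_subset {S : Finset (Fin n)} {i : Fin n} (hi : i ∉ S) :
    (oplus E S i).erase i ⊆ S := by
  intro x hx
  rw [Finset.mem_erase] at hx
  rcases Finset.mem_insert.mp (oplus_subset hx.2) with h | h
  · exact absurd h hx.1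
  · exact h

end Dev4
section Dev5
open Classical MvPolynomial
variable {n : ℕ} (E : Fin n → Fin n → Prop)

local notation "φ" => algebraMap (MvPolynomial (Fin n ⊕ Fin n) ℤ) (Kn n)

def pcond (S : Finset (Fin n)) (i j : Fin n) (m : ℕ) (v : Fin (m+1) → Fin n) : Prop :=
  Function.Injective v ∧ v 0 = i ∧ v (Fin.last m) = j ∧
    (∀ r : Fin m, E (v r.castSucc) (v r.succ)) ∧
    (∀ r : Fin (m + 1), r ≠ 0 → r ≠ Fin.last m → v r ∈ S)

noncomputable def Pnum (S : Finset (Fin n)) (i j : Fin n) : MvPolynomial (Fin n ⊕ Fin n) ℤ :=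
  ∑ m ∈ Finset.range (n + 1), ∑ v : Fin (m + 1) → Fin n,
    if pcond E S i j m v then
      Ynum E (S \ Finset.image v Finset.univ) *
        ∏ t ∈ S ∩ Finset.image v Finset.univ, X (Sum.inr t)
    else 0

lemma PP_eq_Pnum (S : Finset (Fin n)) (i j : Fin n) :
    PP E S i j = φ (Pnum E S i j) / φ (∏ t ∈ S, X (Sum.inr t)) := by
  have hD2 : ∀ P : Finset (Fin n), φ (∏ t ∈ S ∩ P, X (Sum.inr t)) ≠ (0 : Kn n) := by
    intro P
    apply phi_ne_zero
    exact Finset.prod_ne_zero_iff.mpr (fun t _ => MvPolynomial.X_ne_zero _)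
  have key : ∀ P : Finset (Fin n),
      YY E (S \ P) = φ (Ynum E (S \ P) * ∏ t ∈ S ∩ P, X (Sum.inr t)) /
        φ (∏ t ∈ S, X (Sum.inr t)) := by
    intro P
    rw [YY, prodXX_eq]
    have hsplit : (∏ t ∈ S, X (Sum.inr t) : MvPolynomial (Fin n ⊕ Fin n) ℤ)
        = (∏ t ∈ S \ P, X (Sum.inr t)) * ∏ t ∈ S ∩ P, X (Sum.inr t) := by
      conv_lhs => rw [← Finset.sdiff_union_inter S P]
      rw [Finset.prod_union (Finset.disjoint_sdiff_inter S P)]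
    rw [hsplit, map_mul, map_mul]
    rw [div_mul_eq_div_div_swap]
    rw [mul_div_assoc, div_self (hD2 P), mul_one]
  rw [PP, Pnum, map_sum, Finset.sum_div]
  apply Finset.sum_congr rfl
  intro m _
  rw [map_sum, Finset.sum_div]
  apply Finset.sum_congr rfl
  intro v _
  by_cases hc : pcond E S i j m v
  · rw [if_pos, if_pos hc]
    · exact key _
    · exact hc
  · rw [if_neg, if_neg hc]
    · simp
    · exact hc

end Dev5
section Dev6
open Classical MvPolynomial
variable {n : ℕ}

/-- glue a path onto a function -/
noncomputable def pglue {m : ℕ} (v : Fin (m+1) → Fin n) (g : Fin n → Fin n) :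
    Fin n → Fin n := fun x =>
  if h : ∃ r : Fin m, v r.castSucc = x then v (Classical.choose h).succ else g x

variable {m : ℕ} {v : Fin (m+1) → Fin n} {g : Fin n → Fin n}

lemma pglue_path (hv : Function.Injective v) (r : Fin m) :
    pglue v g (v r.castSucc) = v r.succ := by
  have h : ∃ r' : Fin m, v r'.castSucc = v r.castSucc := ⟨r, rfl⟩
  rw [pglue, dif_pos h]
  have hc := Classical.choose_spec h
  have : (Classical.choose h) = r := Fin.castSucc_injective m (hv hc)
  rw [this]

lemma pglue_off {x : Fin n} (hx : ∀ r : Fin m, v r.castSucc ≠ x) :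
    pglue v g x = g x := by
  rw [pglue, dif_neg]
  push_neg
  exact hx

lemma pglue_last (hv : Function.Injective v)
    (hg : g (v (Fin.last m)) = v (Fin.last m)) :
    pglue v g (v (Fin.last m)) = v (Fin.last m) := by
  rw [pglue_off, hg]
  intro r h
  exact absurd (hv h) (Fin.ne_of_lt (Fin.castSucc_lt_last r))

lemma pglue_iter_from (hv : Function.Injective v)
    (hg : g (v (Fin.last m)) = v (Fin.last m)) (r : Fin (m+1)) :
    ∀ (t : ℕ), (pglue v g)^[t] (v r) =
      if h : (r : ℕ) + t ≤ m then v ⟨(r : ℕ) + t, by omega⟩ else v (Fin.last m)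
  | 0 => by
    rw [dif_pos (by omega)]
    simp [Function.iterate_zero, Fin.eta]
  | (t+1) => by
    rw [Function.iterate_succ_apply', pglue_iter_from hv hg r t]
    by_cases h : (r : ℕ) + t ≤ m
    · rw [dif_pos h]
      by_cases h' : (r : ℕ) + t < m
      · have : (⟨(r : ℕ) + t, by omega⟩ : Fin (m+1)) =
            Fin.castSucc ⟨(r : ℕ) + t, h'⟩ := rfl
        rw [this, pglue_path hv, dif_pos (by omega)]
        congr 1
      · have hm : (r : ℕ) + t = m := by omega
        have : (⟨(r : ℕ) + t, by omega⟩ : Fin (m+1)) = Fin.last m := by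
          simp [Fin.ext_iff, hm]
        rw [this, pglue_last hv hg, dif_neg (by omega)]
    · rw [dif_neg h, pglue_last hv hg, dif_neg (by omega)]

lemma pglue_iterate (hv : Function.Injective v)
    (hg : g (v (Fin.last m)) = v (Fin.last m)) (r : Fin (m+1)) :
    (pglue v g)^[(r : ℕ)] (v 0) = v r := by
  have h0 : ((0 : Fin (m+1)) : ℕ) = 0 := rfl
  have := pglue_iter_from (g := g) hv hg 0 (r : ℕ)
  simp only [h0] at this
  rw [this, dif_pos (by omega)]
  congr 1
  simp [Fin.ext_iff]

end Dev6
section Dev6b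
open Classical MvPolynomial
variable {n : ℕ} {E : Fin n → Fin n → Prop} {T : Finset (Fin n)} {a : Fin n}
variable {m : ℕ} {v : Fin (m+1) → Fin n} {g : Fin n → Fin n}

/-- image of the path -/
local notation "imv" => Finset.image v Finset.univ

lemma mem_imv {x : Fin n} : x ∈ imv ↔ ∃ r, v r = x := by simp

lemma glast_fix (hg : Fcond E (T \ imv) g) : g (v (Fin.last m)) = v (Fin.last m) :=
  hg.1 _ (fun h => (Finset.mem_sdiff.mp h).2 (mem_imv.mpr ⟨_, rfl⟩))

lemma vr_mem_I (h0 : v 0 = a)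
    (hmid : ∀ r : Fin (m + 1), r ≠ 0 → r ≠ Fin.last m → v r ∈ T)
    {r : Fin (m+1)} (hr : r ≠ Fin.last m) : v r ∈ insert a T := by
  by_cases h : r = 0
  · subst h; rw [h0]; exact Finset.mem_insert_self _ _
  · exact Finset.mem_insert_of_mem (hmid r h hr)

lemma castSucc_mem_I (h0 : v 0 = a)
    (hmid : ∀ r : Fin (m + 1), r ≠ 0 → r ≠ Fin.last m → v r ∈ T)
    (r : Fin m) : v r.castSucc ∈ insert a T :=
  vr_mem_I h0 hmid (Fin.ne_of_lt (Fin.castSucc_lt_last r))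

lemma fwd_Fcond (hv : Function.Injective v) (h0 : v 0 = a)
    (hedge : ∀ r : Fin m, E (v r.castSucc) (v r.succ))
    (hmid : ∀ r : Fin (m + 1), r ≠ 0 → r ≠ Fin.last m → v r ∈ T)
    (hg : Fcond E (T \ imv) g) :
    Fcond E (insert a T) (pglue v g) := by
  have hgl := glast_fix hg
  refine ⟨?_, ?_, ?_⟩
  · -- fixes outside I
    intro x hx
    rw [pglue_off (fun r h => hx (by rw [← h]; exact castSucc_mem_I h0 hmid r))]
    exact hg.1 x (fun h => hx (Finset.mem_insert_of_mem (Finset.mem_sdiff.mp h).1))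
  · -- edge or fix on I
    intro x hx
    by_cases hc : ∃ r : Fin m, v r.castSucc = x
    · obtain ⟨r, rfl⟩ := hc
      rw [pglue_path hv]
      exact Or.inr (hedge r)
    · push_neg at hc
      rw [pglue_off hc]
      by_cases hxT : x ∈ T \ imv
      · exact hg.2.1 x hxT
      · exact Or.inl (hg.1 x hxT)
  · -- acyclicity
    intro x hx k hk hin hcyc
    by_cases hxv : x ∈ imv
    · obtain ⟨r, -, rfl⟩ := Finset.mem_image.mp hxv
      by_cases hr : r = Fin.last m
      · subst hr
        exact pglue_last hv hgl
      · exfalso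
        rw [pglue_iter_from hv hgl r k] at hcyc
        by_cases h : (r : ℕ) + k ≤ m
        · rw [dif_pos h] at hcyc
          have := hv hcyc
          rw [Fin.ext_iff] at this
          simp at this
          omega
        · rw [dif_neg h] at hcyc
          exact hr (hv hcyc).symm
    · -- x not on the path
      have hxT : x ∈ T \ imv := by
        rw [Finset.mem_sdiff]
        refine ⟨?_, hxv⟩
        rcases Finset.mem_insert.mp hx with h | h
        · exact absurd (h ▸ mem_imv.mpr ⟨0, h0⟩ : x ∈ imv) hxv
        · exact h
      by_cases hall : ∀ t, t < k → (pglue v g)^[t] x ∈ T \ imv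
      · have hag : ∀ s, s ≤ k → (pglue v g)^[s] x = g^[s] x := fun s hs =>
          iterate_agree (pglue v g) g (↑(T \ imv))
            (fun y hy => pglue_off (fun r h => by
              have : y ∈ imv := h ▸ mem_imv.mpr ⟨_, rfl⟩
              exact absurd this (Finset.mem_sdiff.mp (by simpa using hy)).2)) x s
            (fun t ht => by
              have := hall t (lt_of_lt_of_le ht hs)
              simpa using this)
        have hgx : g x = x := hg.2.2 x hxT k hk
          (fun t ht => by rw [← hag t (le_of_lt ht)]; exact hall t ht)
          (by rw [← hag k le_rfl]; exact hcyc)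
        rw [pglue_off (fun r h => by
          have : x ∈ imv := h ▸ mem_imv.mpr ⟨_, rfl⟩
          exact absurd this hxv)]
        exact hgx
      · exfalso
        push_neg at hall
        obtain ⟨t, htk, hnot⟩ := hall
        have hyI : (pglue v g)^[t] x ∈ insert a T := hin t htk
        have hyv : (pglue v g)^[t] x ∈ imv := by
          by_contra hyv
          apply hnot
          rw [Finset.mem_sdiff]
          refine ⟨?_, hyv⟩
          rcases Finset.mem_insert.mp hyI with h | h
          · exact absurd (h ▸ mem_imv.mpr ⟨0, h0⟩) hyv
          · exact h
        obtain ⟨r, -, hr⟩ := Finset.mem_image.mp hyv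
        have hxit : (pglue v g)^[k - t] ((pglue v g)^[t] x) = x := by
          rw [← Function.iterate_add_apply, Nat.sub_add_cancel (le_of_lt htk)]
          exact hcyc
        rw [← hr, pglue_iter_from hv hgl r (k - t)] at hxit
        apply hxv
        by_cases h : (r : ℕ) + (k - t) ≤ m
        · rw [dif_pos h] at hxit
          exact hxit ▸ mem_imv.mpr ⟨_, rfl⟩
        · rw [dif_neg h] at hxit
          exact hxit ▸ mem_imv.mpr ⟨_, rfl⟩
end Dev6b
section Dev6c
open Classical MvPolynomial
variable {n : ℕ} {E : Fin n → Fin n → Prop} {T : Finset (Fin n)} {a : Fin n}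
variable {m : ℕ} {v : Fin (m+1) → Fin n} {g : Fin n → Fin n}

local notation "imv" => Finset.image v Finset.univ

lemma fwd_wt (hv : Function.Injective v) (h0 : v 0 = a) (ha : a ∉ T)
    (hmid : ∀ r : Fin (m + 1), r ≠ 0 → r ≠ Fin.last m → v r ∈ T)
    (hg : Fcond E (T \ imv) g) :
    wt (insert a T) (pglue v g) =
      wt (T \ imv) g * (∏ t ∈ T ∩ imv, X (Sum.inr t)) *
        (if v (Fin.last m) ∈ insert a T then X (Sum.inl (v (Fin.last m)))
          else X (Sum.inr (v (Fin.last m)))) := by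
  have hgl := glast_fix (E := E) hg
  set f := pglue v g with hf
  set I := insert a T with hI
  -- pointwise facts
  have hfv : ∀ r : Fin m, f (v r.castSucc) = v r.succ := fun r => pglue_path hv r
  have hfacmid : ∀ r : Fin m,
      (if f (v r.castSucc) = v r.castSucc then X (Sum.inl (v r.castSucc))
        else X (Sum.inr (f (v r.castSucc)))) = (X (Sum.inr (v r.succ)) :
          MvPolynomial (Fin n ⊕ Fin n) ℤ) := by
    intro r
    rw [hfv r, if_neg (fun h => absurd (hv h).symm (Fin.ne_of_lt (Fin.castSucc_lt_succ : r.castSucc < r.succ)))]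
  have hflast : f (v (Fin.last m)) = v (Fin.last m) := pglue_last hv hgl
  -- split the product over I
  have hsub : I ∩ imv ⊆ I := Finset.inter_subset_left
  have hIdiff : I \ (I ∩ imv) = T \ imv := by
    ext x
    simp only [Finset.mem_sdiff, Finset.mem_inter, hI, Finset.mem_insert]
    constructor
    · rintro ⟨h1 | h1, h2⟩
      · exact absurd (by exact ⟨Or.inl h1, by rw [h1]; exact mem_imv.mpr ⟨0, h0⟩⟩) h2
      · exact ⟨h1, fun hx => h2 ⟨Or.inr h1, hx⟩⟩
    · rintro ⟨h1, h2⟩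
      exact ⟨Or.inr h1, fun hx => h2 hx.2⟩
  have hsplit : wt I f = wt (T \ imv) f * ∏ x ∈ I ∩ imv,
      (if f x = x then X (Sum.inl x) else X (Sum.inr (f x))) := by
    rw [wt, ← Finset.prod_sdiff hsub, hIdiff, wt]
  have hoff : wt (T \ imv) f = wt (T \ imv) g := by
    apply wt_congr
    intro x hx
    refine pglue_off (fun r h => ?_)
    have : x ∈ imv := by rw [← h]; exact mem_imv.mpr ⟨_, rfl⟩
    exact absurd this (Finset.mem_sdiff.mp hx).2
  rw [hsplit, hoff, mul_assoc]
  congr 1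
  -- now compute the product over I ∩ imv
  have hvcs_inj : ∀ x ∈ (Finset.univ : Finset (Fin m)), ∀ y ∈ Finset.univ,
      v (Fin.castSucc x) = v (Fin.castSucc y) → x = y :=
    fun x _ y _ h => Fin.castSucc_injective m (hv h)
  have hvs_inj : ∀ x ∈ (Finset.univ : Finset (Fin m)), ∀ y ∈ Finset.univ,
      v (Fin.succ x) = v (Fin.succ y) → x = y :=
    fun x _ y _ h => (Fin.succ_injective m) (hv h)
  by_cases hlast : v (Fin.last m) ∈ I
  · -- fixed-point case
    rw [if_pos hlast]
    have hIim : I ∩ imv = imv := by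
      apply Finset.inter_eq_right.mpr
      intro x hx
      obtain ⟨r, -, rfl⟩ := Finset.mem_image.mp hx
      by_cases hr : r = Fin.last m
      · subst hr; exact hlast
      · exact vr_mem_I h0 hmid hr
    have hTim : T ∩ imv = Finset.image (fun r : Fin m => v r.succ) Finset.univ := by
      ext x
      simp only [Finset.mem_inter, Finset.mem_image, Finset.mem_univ, true_and]
      constructor
      · rintro ⟨hxT, r, rfl⟩
        have hr0 : r ≠ 0 := fun h => ha (by rw [h, h0] at hxT; exact hxT)
        obtain ⟨r', hr'⟩ := Fin.exists_succ_eq.mpr hr0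
        exact ⟨r', by rw [hr']⟩
      · rintro ⟨r, rfl⟩
        refine ⟨?_, ⟨r.succ, rfl⟩⟩
        by_cases hr : r.succ = Fin.last m
        · -- v last ∈ I and last = succ r ≠ 0 so v last ∈ T
          rw [hr]
          rcases Finset.mem_insert.mp hlast with h | h
          · exfalso
            have : (Fin.last m) = 0 := hv (by rw [h, h0])
            rw [← hr] at this
            exact (Fin.succ_ne_zero r) this
          · exact h
        · exact hmid r.succ (Fin.succ_ne_zero r) hr
    rw [hIim, hTim, Finset.prod_image hvs_inj]
    -- LHS: product over all path vertices
    have him : ∏ x ∈ imv, (if f x = x then X (Sum.inl x) else X (Sum.inr (f x))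
          : MvPolynomial (Fin n ⊕ Fin n) ℤ) =
        ∏ r : Fin (m+1), (if f (v r) = v r then X (Sum.inl (v r))
          else X (Sum.inr (f (v r)))) := by
      exact Finset.prod_image (fun x _ y _ h => hv h)
    rw [him, Fin.prod_univ_castSucc]
    rw [if_pos hflast]
    congr 1
    exact Finset.prod_congr rfl (fun r _ => hfacmid r)
  · -- exit case
    rw [if_neg hlast]
    have hm1 : m ≠ 0 := by
      intro h
      apply hlast
      subst h
      have : Fin.last 0 = 0 := rfl
      rw [this, h0]
      exact Finset.mem_insert_self _ _
    have hIim : I ∩ imv = Finset.image (fun r : Fin m => v r.castSucc) Finset.univ := by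
      ext x
      simp only [Finset.mem_inter, Finset.mem_image, Finset.mem_univ, true_and]
      constructor
      · rintro ⟨hxI, r, -, rfl⟩
        by_cases hr : r = Fin.last m
        · exact absurd (hr ▸ hxI) hlast
        · have hrlt : (r : ℕ) < m := by
            rcases lt_or_eq_of_le (Nat.lt_succ_iff.mp r.isLt) with h | h
            · exact h
            · exact absurd (Fin.ext h) hr
          exact ⟨⟨(r : ℕ), hrlt⟩, by congr 1⟩
      · rintro ⟨r, rfl⟩
        exact ⟨vr_mem_I h0 hmid (Fin.ne_of_lt (Fin.castSucc_lt_last r)), r.castSucc, rfl⟩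
    have hTins : Finset.image (fun r : Fin m => v r.succ) Finset.univ =
        insert (v (Fin.last m)) (T ∩ imv) := by
      ext x
      simp only [Finset.mem_image, Finset.mem_univ, true_and, Finset.mem_insert,
        Finset.mem_inter]
      constructor
      · rintro ⟨r, rfl⟩
        by_cases hr : r.succ = Fin.last m
        · exact Or.inl (by rw [hr])
        · exact Or.inr ⟨hmid r.succ (Fin.succ_ne_zero r) hr, ⟨r.succ, rfl⟩⟩
      · rintro (h | ⟨hxT, hxv⟩)
        · refine ⟨⟨m - 1, by omega⟩, ?_⟩
          rw [h]
          congr 1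
          rw [Fin.ext_iff]
          simp [Fin.val_succ]
          omega
        · obtain ⟨r, hr⟩ := hxv
          have hr0 : r ≠ 0 := fun h => ha (by rw [h, h0] at hr; rw [← hr] at hxT; exact hxT)
          obtain ⟨r', hr'⟩ := Fin.exists_succ_eq.mpr hr0
          exact ⟨r', by rw [hr', hr]⟩
    have hvl_not : v (Fin.last m) ∉ T ∩ imv := by
      intro h
      exact hlast (Finset.mem_insert_of_mem (Finset.mem_inter.mp h).1)
    have hprod : ∏ r : Fin m, (X (Sum.inr (v r.succ)) : MvPolynomial (Fin n ⊕ Fin n) ℤ)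
        = ∏ t ∈ insert (v (Fin.last m)) (T ∩ imv), X (Sum.inr t) := by
      rw [← hTins, Finset.prod_image hvs_inj]
    rw [hIim, Finset.prod_image hvcs_inj]
    rw [Finset.prod_congr rfl (fun r _ => hfacmid r), hprod, Finset.prod_insert hvl_not]
    ring
end Dev6c
section Dev6d
open Classical MvPolynomial
variable {n : ℕ} {E : Fin n → Fin n → Prop}

def isStop (I : Finset (Fin n)) (f : Fin n → Fin n) (a : Fin n) (k : ℕ) : Prop :=
  f^[k+1] a = f^[k] a ∨ f^[k+1] a ∉ I

noncomputable def stopK (I : Finset (Fin n)) (f : Fin n → Fin n) (a : Fin n) : ℕ :=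
  if h : ∃ k, isStop I f a k then Nat.find h else 0

variable {I : Finset (Fin n)} {f : Fin n → Fin n} {a : Fin n}

lemma stop_exists (hf : Fcond E I f) (haI : a ∈ I) : ∃ k, isStop I f a k := by
  by_contra h
  push_neg at h
  have h' : ∀ k, f^[k+1] a ≠ f^[k] a ∧ f^[k+1] a ∈ I := by
    intro k
    have := h k
    rw [isStop, not_or, not_not] at this
    exact this
  have hmem : ∀ k, f^[k] a ∈ I := by
    intro k
    cases k with
    | zero => exact haI
    | succ k => exact (h' k).2
  obtain ⟨r, s, hne, heq⟩ := Finite.exists_ne_map_eq_of_infinite (fun k : ℕ => f^[k] a)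
  wlog hrs : r < s generalizing r s
  · exact this s r (Ne.symm hne) heq.symm (by omega)
  have hcyc : f^[s-r] (f^[r] a) = f^[r] a := by
    rw [← Function.iterate_add_apply, Nat.sub_add_cancel (le_of_lt hrs)]
    exact heq.symm
  have hfix := hf.2.2 (f^[r] a) (hmem r) (s-r) (by omega)
    (fun t _ => by rw [← Function.iterate_add_apply]; exact hmem (t+r)) hcyc
  exact (h' r).1 (by rw [Function.iterate_succ_apply', hfix])

lemma stopK_spec (h : ∃ k, isStop I f a k) : isStop I f a (stopK I f a) := by
  rw [stopK, dif_pos h]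
  exact Nat.find_spec h

lemma stopK_min (h : ∃ k, isStop I f a k) {s : ℕ} (hs : s < stopK I f a) :
    f^[s+1] a ≠ f^[s] a ∧ f^[s+1] a ∈ I := by
  rw [stopK, dif_pos h] at hs
  have := Nat.find_min h hs
  rw [isStop, not_or, not_not] at this
  exact this

lemma stopK_unique {k : ℕ} (hk : isStop I f a k)
    (hmin : ∀ s, s < k → ¬ isStop I f a s) : stopK I f a = k := by
  have h : ∃ k, isStop I f a k := ⟨k, hk⟩
  rw [stopK, dif_pos h]
  exact (Nat.find_eq_iff h).mpr ⟨hk, hmin⟩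

lemma mem_iter (hf : Fcond E I f) (haI : a ∈ I) :
    ∀ s, s ≤ stopK I f a → f^[s] a ∈ I := by
  intro s hs
  cases s with
  | zero => exact haI
  | succ s => exact (stopK_min (stop_exists hf haI) (by omega)).2

lemma inj_iter (hf : Fcond E I f) (haI : a ∈ I) :
    ∀ r s : ℕ, r < s → s ≤ stopK I f a → f^[r] a ≠ f^[s] a := by
  intro r s hrs hsK heq
  have hcyc : f^[s-r] (f^[r] a) = f^[r] a := by
    rw [← Function.iterate_add_apply, Nat.sub_add_cancel (le_of_lt hrs)]
    exact heq.symm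
  have hfix := hf.2.2 (f^[r] a) (mem_iter hf haI r (by omega)) (s-r) (by omega)
    (fun t ht => by
      rw [← Function.iterate_add_apply]
      exact mem_iter hf haI (t+r) (by omega)) hcyc
  exact (stopK_min (stop_exists hf haI) (lt_of_lt_of_le hrs hsK)).1
    (by rw [Function.iterate_succ_apply', hfix])

/-- number of edges of the trajectory path -/
noncomputable def mlen (I : Finset (Fin n)) (f : Fin n → Fin n) (a : Fin n) : ℕ :=
  if f^[stopK I f a + 1] a = f^[stopK I f a] a then stopK I f a else stopK I f a + 1

lemma mlen_cases (hf : Fcond E I f) (haI : a ∈ I) :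
    (mlen I f a = stopK I f a ∧ f^[stopK I f a + 1] a = f^[stopK I f a] a) ∨
    (mlen I f a = stopK I f a + 1 ∧ f^[mlen I f a] a ∉ I) := by
  rw [mlen]
  by_cases h : f^[stopK I f a + 1] a = f^[stopK I f a] a
  · exact Or.inl ⟨if_pos h, h⟩
  · refine Or.inr ⟨if_neg h, ?_⟩
    rw [if_neg h]
    rcases stopK_spec (stop_exists hf haI) with h' | h'
    · exact absurd h' h
    · exact h'

lemma mlen_mem_iter (hf : Fcond E I f) (haI : a ∈ I) :
    ∀ s, s < mlen I f a + 1 → s ≤ stopK I f a → f^[s] a ∈ I :=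
  fun s _ hs => mem_iter hf haI s hs

lemma mlen_inj (hf : Fcond E I f) (haI : a ∈ I) :
    ∀ r s : ℕ, r < s → s ≤ mlen I f a → f^[r] a ≠ f^[s] a := by
  intro r s hrs hsm heq
  rcases mlen_cases hf haI with ⟨hm, -⟩ | ⟨hm, hout⟩
  · exact inj_iter hf haI r s hrs (hm ▸ hsm) heq
  · rcases lt_or_eq_of_le hsm with h | h
    · exact inj_iter hf haI r s hrs (by omega) heq
    · subst h
      rw [← heq] at hout
      exact hout (mem_iter hf haI r (by omega))
end Dev6d
section Dev6e
open Classical MvPolynomial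
variable {n : ℕ} {E : Fin n → Fin n → Prop}

/-- the trajectory path of `f` started at `a` -/
noncomputable def vtraj (I : Finset (Fin n)) (f : Fin n → Fin n) (a : Fin n) :
    Fin (mlen I f a + 1) → Fin n := fun r => f^[(r : ℕ)] a

/-- the function `f` with the trajectory removed -/
noncomputable def gres (I : Finset (Fin n)) (f : Fin n → Fin n) (a : Fin n) :
    Fin n → Fin n := fun x =>
  if ∃ r : Fin (mlen I f a + 1), f^[(r : ℕ)] a = x then x else f x

variable {I T : Finset (Fin n)} {f : Fin n → Fin n} {a : Fin n}

lemma back_inj (hf : Fcond E I f) (haI : a ∈ I) :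
    Function.Injective (vtraj I f a) := by
  intro r s h
  by_contra hne
  rcases lt_trichotomy (r : ℕ) (s : ℕ) with hlt | heq | hlt
  · exact mlen_inj hf haI r s hlt (by omega) h
  · exact hne (Fin.ext heq)
  · exact mlen_inj hf haI s r hlt (by omega) h.symm

lemma back_v0 : vtraj I f a 0 = a := rfl

lemma back_le_stopK (hf : Fcond E I f) (haI : a ∈ I) {s : ℕ}
    (hs : s < mlen I f a) : s ≤ stopK I f a := by
  rcases mlen_cases hf haI with ⟨hm, -⟩ | ⟨hm, -⟩ <;> omega

lemma back_edges (hf : Fcond E I f) (haI : a ∈ I) (r : Fin (mlen I f a)) :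
    E (vtraj I f a r.castSucc) (vtraj I f a r.succ) := by
  have h1 : f^[(r : ℕ)] a ≠ f^[(r : ℕ)+1] a :=
    fun h => mlen_inj hf haI (r : ℕ) ((r : ℕ)+1) (by omega) (by omega) h
  have h2 : f^[(r : ℕ)] a ∈ I :=
    mem_iter hf haI _ (back_le_stopK hf haI r.isLt)
  rcases hf.2.1 _ h2 with h | h
  · rw [Function.iterate_succ_apply'] at h1
    exact absurd h h1.symm
  · show E (f^[((r : ℕ))] a) (f^[(r : ℕ)+1] a)
    rwa [Function.iterate_succ_apply']

lemma back_mid (hf : Fcond E (insert a T) f) (haT : a ∉ T)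
    (r : Fin (mlen (insert a T) f a + 1)) (hr0 : r ≠ 0) (hrl : r ≠ Fin.last _) :
    vtraj (insert a T) f a r ∈ T := by
  have haI : a ∈ insert a T := Finset.mem_insert_self a T
  have hrm : (r : ℕ) < mlen (insert a T) f a := by
    have h2 := r.isLt
    have h3 : (r : ℕ) ≠ mlen (insert a T) f a := fun h => hrl (Fin.ext h)
    omega
  have hmem : f^[(r : ℕ)] a ∈ insert a T :=
    mem_iter hf haI _ (back_le_stopK hf haI hrm)
  rcases Finset.mem_insert.mp hmem with h | h
  · exfalso
    have : (r : ℕ) ≠ 0 := fun hh => hr0 (Fin.ext hh)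
    exact mlen_inj hf haI 0 (r : ℕ) (by omega) (by omega) (h.symm : f^[0] a = f^[(r:ℕ)] a)
  · exact h

lemma back_card (hf : Fcond E I f) (haI : a ∈ I) :
    mlen I f a ∈ Finset.range (n + 1) := by
  have := Fintype.card_le_of_injective _ (back_inj hf haI)
  simp only [Fintype.card_fin] at this
  rw [Finset.mem_range]
  omega

lemma back_last (hf : Fcond E I f) (haI : a ∈ I) :
    f (vtraj I f a (Fin.last _)) = vtraj I f a (Fin.last _) ∨
      vtraj I f a (Fin.last _) ∉ I := by
  rcases mlen_cases hf haI with ⟨hm, hfix⟩ | ⟨-, hout⟩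
  · left
    show f (f^[mlen I f a] a) = f^[mlen I f a] a
    rw [hm, ← Function.iterate_succ_apply' f (stopK I f a) a]
    exact hfix
  · right
    show f^[mlen I f a] a ∉ I
    exact hout

lemma back_gcond (hf : Fcond E (insert a T) f) (haT : a ∉ T) :
    Fcond E (T \ Finset.image (vtraj (insert a T) f a) Finset.univ)
      (gres (insert a T) f a) := by
  have haI : a ∈ insert a T := Finset.mem_insert_self a T
  set M := mlen (insert a T) f a with hM
  set W := T \ Finset.image (vtraj (insert a T) f a) Finset.univ with hW
  have hWspec : ∀ x, x ∈ W ↔ x ∈ T ∧ ¬∃ r : Fin (M+1), f^[(r : ℕ)] a = x := by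
    intro x
    rw [hW, Finset.mem_sdiff]
    simp [vtraj]
    exact fun _ => Iff.rfl
  have hgoff : ∀ x ∈ W, gres (insert a T) f a x = f x := by
    intro x hx
    rw [gres, if_neg ((hWspec x).mp hx).2]
  refine ⟨?_, ?_, ?_⟩
  · intro x hx
    rw [gres]
    by_cases hc : ∃ r : Fin (M+1), f^[(r : ℕ)] a = x
    · rw [if_pos hc]
    · rw [if_neg hc]
      apply hf.1
      intro hxI
      rcases Finset.mem_insert.mp hxI with h | h
      · exact hc ⟨0, h.symm⟩
      · exact hx ((hWspec x).mpr ⟨h, hc⟩)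
  · intro x hx
    rw [hgoff x hx]
    exact hf.2.1 x (Finset.mem_insert_of_mem ((hWspec x).mp hx).1)
  · intro x hx k hk hin hcyc
    have hag : ∀ s, s ≤ k → (gres (insert a T) f a)^[s] x = f^[s] x := fun s hs =>
      iterate_agree _ f (↑W) (fun y hy => hgoff y (by simpa using hy)) x s
        (fun t ht => hin t (lt_of_lt_of_le ht hs))
    have hfx : f x = x := hf.2.2 x
      (Finset.mem_insert_of_mem ((hWspec x).mp hx).1) k hk
      (fun t ht => by
        rw [← hag t (le_of_lt ht)]
        have := hin t ht
        rw [hW, Finset.mem_sdiff] at this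
        exact Finset.mem_insert_of_mem this.1)
      (by rw [← hag k le_rfl]; exact hcyc)
    rw [hgoff x hx]
    exact hfx

lemma back_pglue (hf : Fcond E (insert a T) f) (haT : a ∉ T) :
    pglue (vtraj (insert a T) f a) (gres (insert a T) f a) = f := by
  have haI : a ∈ insert a T := Finset.mem_insert_self a T
  funext x
  by_cases hc : ∃ r : Fin (mlen (insert a T) f a), vtraj (insert a T) f a r.castSucc = x
  · obtain ⟨r, rfl⟩ := hc
    rw [pglue_path (back_inj hf haI)]
    show f^[(r : ℕ) + 1] a = f (f^[(r : ℕ)] a)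
    rw [Function.iterate_succ_apply']
  · push_neg at hc
    rw [pglue_off hc, gres]
    by_cases hx : ∃ r : Fin (mlen (insert a T) f a + 1), f^[(r : ℕ)] a = x
    · rw [if_pos hx]
      obtain ⟨r, hr⟩ := hx
      have hrl : r = Fin.last _ := by
        by_contra hne
        have hrm : (r : ℕ) < mlen (insert a T) f a := by
          have := r.isLt
          have : (r : ℕ) ≠ mlen (insert a T) f a := fun h => hne (Fin.ext h)
          omega
        exact hc ⟨(r : ℕ), hrm⟩ hr
      subst hrl
      rcases back_last (E := E) hf haI with h | h
      · simp only [vtraj] at h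
        rw [hr] at h
        exact h.symm
      · simp only [vtraj] at h
        rw [hr] at h
        exact (hf.1 x h).symm
    · rw [if_neg hx]
end Dev6e
section Dev6f
open Classical MvPolynomial
variable {n : ℕ} {E : Fin n → Fin n → Prop} {T : Finset (Fin n)} {a : Fin n}
variable {m : ℕ} {v : Fin (m+1) → Fin n} {g : Fin n → Fin n}

local notation "imv" => Finset.image v Finset.univ

lemma glue_iter (hv : Function.Injective v) (h0 : v 0 = a)
    (hg : Fcond E (T \ imv) g) (s : ℕ) (hs : s ≤ m) :
    (pglue v g)^[s] a = v ⟨s, by omega⟩ := by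
  rw [← h0]
  exact pglue_iterate hv (glast_fix hg) ⟨s, by omega⟩

lemma back_mlen (hv : Function.Injective v) (h0 : v 0 = a)
    (hmid : ∀ r : Fin (m + 1), r ≠ 0 → r ≠ Fin.last m → v r ∈ T)
    (hg : Fcond E (T \ imv) g) :
    mlen (insert a T) (pglue v g) a = m := by
  have hgl := glast_fix (E := E) hg
  set f := pglue v g with hfdef
  have hit : ∀ s : ℕ, ∀ hs : s ≤ m, f^[s] a = v ⟨s, by omega⟩ :=
    fun s hs => glue_iter hv h0 hg s hs
  have hlastv : (⟨m, by omega⟩ : Fin (m+1)) = Fin.last m := rfl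
  have hfm : f^[m] a = v (Fin.last m) := by rw [hit m le_rfl, hlastv]
  have hfm1 : f^[m+1] a = v (Fin.last m) := by
    rw [Function.iterate_succ_apply', hfm]
    exact pglue_last hv hgl
  have hne : ∀ s : ℕ, s < m → f^[s+1] a ≠ f^[s] a := by
    intro s hs h
    rw [hit (s+1) (by omega), hit s (by omega)] at h
    have := hv h
    rw [Fin.ext_iff] at this
    simp at this
  by_cases hlast : v (Fin.last m) ∈ insert a T
  · -- fixed-point case : stopping time is m
    have hstop : isStop (insert a T) f a m := Or.inl (by rw [hfm1, hfm])
    have hmin : ∀ s, s < m → ¬ isStop (insert a T) f a s := by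
      intro s hs
      rw [isStop, not_or, not_not]
      refine ⟨hne s hs, ?_⟩
      rw [hit (s+1) (by omega)]
      by_cases h : s + 1 = m
      · rw [show (⟨s+1, by omega⟩ : Fin (m+1)) = Fin.last m from Fin.ext h]
        exact hlast
      · exact vr_mem_I h0 hmid (fun hh => by
          rw [Fin.ext_iff] at hh
          simp at hh
          omega)
    have hK : stopK (insert a T) f a = m := stopK_unique hstop hmin
    rw [mlen, hK, if_pos (by rw [hfm1, hfm])]
  · -- exit case : stopping time is m - 1
    have hm0 : m ≠ 0 := by
      intro h
      apply hlast
      subst h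
      rw [show Fin.last 0 = 0 from rfl, h0]
      exact Finset.mem_insert_self a T
    have hstop : isStop (insert a T) f a (m-1) := by
      rw [isStop, show m - 1 + 1 = m from by omega]
      exact Or.inr (by rw [hfm]; exact hlast)
    have hmin : ∀ s, s < m - 1 → ¬ isStop (insert a T) f a s := by
      intro s hs
      rw [isStop, not_or, not_not]
      refine ⟨hne s (by omega), ?_⟩
      rw [hit (s+1) (by omega)]
      exact vr_mem_I h0 hmid (fun hh => by
        rw [Fin.ext_iff] at hh
        simp at hh
        omega)
    have hK : stopK (insert a T) f a = m - 1 := stopK_unique hstop hmin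
    rw [mlen, hK, if_neg, show m - 1 + 1 = m from by omega]
    rw [show m - 1 + 1 = m from by omega, hfm, hit (m-1) (by omega)]
    intro h
    have := hv h
    rw [Fin.ext_iff] at this
    simp [Fin.val_last] at this
    omega
end Dev6f
section Dev6g
open Classical MvPolynomial
variable {n : ℕ}

universe uu vv
lemma prod_heq {α α' : Type uu} {β : Type vv} (h : α = α') {x : α} {y : α'} {b c : β}
    (hxy : HEq x y) (hbc : b = c) : HEq (x, b) (y, c) := by
  subst h
  rw [eq_of_heq hxy, hbc]

lemma sum_flat {M : Type*} [AddCommMonoid M] (s : Finset ℕ)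
    (F : (Σ m : ℕ, (Fin (m+1) → Fin n) × (Fin n → Fin n)) → M) :
    (∑ m ∈ s, ∑ v : Fin (m+1) → Fin n, ∑ g : Fin n → Fin n, F ⟨m, (v, g)⟩) =
      ∑ y ∈ s.sigma (fun m => (Finset.univ :
        Finset ((Fin (m+1) → Fin n) × (Fin n → Fin n)))), F y := by
  rw [Finset.sum_sigma]
  apply Finset.sum_congr rfl
  intro m _
  rw [← Finset.univ_product_univ, Finset.sum_product]

lemma keyPoly' {E : Fin n → Fin n → Prop} (T : Finset (Fin n)) (a : Fin n)
    (ha : a ∉ T) :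
    (∑ j : Fin n, Pnum E T a j *
      (if j ∈ insert a T then X (Sum.inl j) else X (Sum.inr j)))
        = Ynum E (insert a T) := by
  classical
  have haI : a ∈ insert a T := Finset.mem_insert_self a T
  have hterm : ∀ (j : Fin n) (m : ℕ) (v : Fin (m+1) → Fin n),
      (if pcond E T a j m v then
          Ynum E (T \ Finset.image v Finset.univ) *
            ∏ t ∈ T ∩ Finset.image v Finset.univ, X (Sum.inr t)
        else 0) * (if j ∈ insert a T then X (Sum.inl j) else X (Sum.inr j))
      = ∑ g : Fin n → Fin n,
          if pcond E T a j m v ∧ Fcond E (T \ Finset.image v Finset.univ) g then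
            wt (T \ Finset.image v Finset.univ) g *
              (∏ t ∈ T ∩ Finset.image v Finset.univ, X (Sum.inr t)) *
              (if j ∈ insert a T then X (Sum.inl j) else X (Sum.inr j))
          else 0 := by
    intro j m v
    by_cases h : pcond E T a j m v
    · rw [if_pos h, Ynum_eq, Finset.sum_mul, Finset.sum_mul]
      apply Finset.sum_congr rfl
      intro g _
      by_cases hgc : Fcond E (T \ Finset.image v Finset.univ) g
      · rw [if_pos hgc, if_pos (show pcond E T a j m v ∧
          Fcond E (T \ Finset.image v Finset.univ) g from ⟨h, hgc⟩)]
      · rw [if_neg hgc, if_neg (show ¬(pcond E T a j m v ∧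
          Fcond E (T \ Finset.image v Finset.univ) g) from fun hc => hgc hc.2),
          zero_mul, zero_mul]
    · rw [if_neg h, zero_mul]
      symm
      apply Finset.sum_eq_zero
      intro g _
      rw [if_neg (show ¬(pcond E T a j m v ∧
        Fcond E (T \ Finset.image v Finset.univ) g) from fun hc => h hc.1)]
  calc (∑ j : Fin n, Pnum E T a j *
      (if j ∈ insert a T then X (Sum.inl j) else X (Sum.inr j)))
      = ∑ j : Fin n, ∑ m ∈ Finset.range (n+1), ∑ v : Fin (m+1) → Fin n,
          (if pcond E T a j m v then
            Ynum E (T \ Finset.image v Finset.univ) *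
              ∏ t ∈ T ∩ Finset.image v Finset.univ, X (Sum.inr t)
          else 0) * (if j ∈ insert a T then X (Sum.inl j) else X (Sum.inr j)) := by
        simp only [Pnum, Finset.sum_mul]
    _ = ∑ j : Fin n, ∑ m ∈ Finset.range (n+1), ∑ v : Fin (m+1) → Fin n,
          ∑ g : Fin n → Fin n,
          (if pcond E T a j m v ∧ Fcond E (T \ Finset.image v Finset.univ) g then
            wt (T \ Finset.image v Finset.univ) g *
              (∏ t ∈ T ∩ Finset.image v Finset.univ, X (Sum.inr t)) *
              (if j ∈ insert a T then X (Sum.inl j) else X (Sum.inr j))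
          else 0) := by
        apply Finset.sum_congr rfl
        intro j _
        apply Finset.sum_congr rfl
        intro m _
        apply Finset.sum_congr rfl
        intro v _
        exact hterm j m v
    _ = ∑ j : Fin n, ∑ y ∈ (Finset.range (n+1)).sigma (fun m => (Finset.univ :
          Finset ((Fin (m+1) → Fin n) × (Fin n → Fin n)))),
          (if pcond E T a j y.1 y.2.1 ∧
              Fcond E (T \ Finset.image y.2.1 Finset.univ) y.2.2 then
            wt (T \ Finset.image y.2.1 Finset.univ) y.2.2 *
              (∏ t ∈ T ∩ Finset.image y.2.1 Finset.univ, X (Sum.inr t)) *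
              (if j ∈ insert a T then X (Sum.inl j) else X (Sum.inr j))
          else 0) := by
        apply Finset.sum_congr rfl
        intro j _
        exact sum_flat _ (fun y =>
          if pcond E T a j y.1 y.2.1 ∧
              Fcond E (T \ Finset.image y.2.1 Finset.univ) y.2.2 then
            wt (T \ Finset.image y.2.1 Finset.univ) y.2.2 *
              (∏ t ∈ T ∩ Finset.image y.2.1 Finset.univ, X (Sum.inr t)) *
              (if j ∈ insert a T then X (Sum.inl j) else X (Sum.inr j))
          else 0)
    _ = ∑ p ∈ Finset.univ ×ˢ (Finset.range (n+1)).sigma (fun m => (Finset.univ :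
          Finset ((Fin (m+1) → Fin n) × (Fin n → Fin n)))),
          (if pcond E T a p.1 p.2.1 p.2.2.1 ∧
              Fcond E (T \ Finset.image p.2.2.1 Finset.univ) p.2.2.2 then
            wt (T \ Finset.image p.2.2.1 Finset.univ) p.2.2.2 *
              (∏ t ∈ T ∩ Finset.image p.2.2.1 Finset.univ, X (Sum.inr t)) *
              (if p.1 ∈ insert a T then X (Sum.inl p.1) else X (Sum.inr p.1))
          else 0) := by
        rw [← Finset.sum_product']
    _ = ∑ p ∈ (Finset.univ ×ˢ (Finset.range (n+1)).sigma (fun m => (Finset.univ :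
          Finset ((Fin (m+1) → Fin n) × (Fin n → Fin n))))).filter
            (fun p => pcond E T a p.1 p.2.1 p.2.2.1 ∧
              Fcond E (T \ Finset.image p.2.2.1 Finset.univ) p.2.2.2),
          (wt (T \ Finset.image p.2.2.1 Finset.univ) p.2.2.2 *
            (∏ t ∈ T ∩ Finset.image p.2.2.1 Finset.univ, X (Sum.inr t)) *
            (if p.1 ∈ insert a T then X (Sum.inl p.1) else X (Sum.inr p.1))) :=
        (Finset.sum_filter _ _).symm
    _ = ∑ f ∈ Finset.univ.filter (Fcond E (insert a T)), wt (insert a T) f := by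
        refine Finset.sum_nbij' (fun p => pglue p.2.2.1 p.2.2.2)
          (fun f => (vtraj (insert a T) f a (Fin.last _),
            ⟨mlen (insert a T) f a, (vtraj (insert a T) f a, gres (insert a T) f a)⟩))
          ?_ ?_ ?_ ?_ ?_
        · -- forward membership
          intro p hp
          obtain ⟨-, ⟨hinj, h0, hlast, hedges, hmid⟩, hgc⟩ := Finset.mem_filter.mp hp
          exact Finset.mem_filter.mpr ⟨Finset.mem_univ _, fwd_Fcond hinj h0 hedges hmid hgc⟩
        · -- backward membership
          intro f hf
          have hfc : Fcond E (insert a T) f := (Finset.mem_filter.mp hf).2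
          refine Finset.mem_filter.mpr ⟨Finset.mem_product.mpr
            ⟨Finset.mem_univ _, Finset.mem_sigma.mpr ⟨back_card hfc haI, Finset.mem_univ _⟩⟩,
            ⟨back_inj hfc haI, back_v0 (I := insert a T) (f := f) (a := a), rfl,
              back_edges hfc haI,
              fun r h1 h2 => back_mid hfc ha r h1 h2⟩, back_gcond hfc ha⟩
        · -- left inverse
          intro p hp
          obtain ⟨j, ⟨m, v, g⟩⟩ := p
          obtain ⟨-, ⟨hinj, h0, hlast, hedges, hmid⟩, hgc⟩ := Finset.mem_filter.mp hp
          set f' := pglue v g with hf'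
          have hm : mlen (insert a T) f' a = m := back_mlen hinj h0 hmid hgc
          have hgl := glast_fix (E := E) hgc
          have hiter : ∀ r : Fin (m+1), f'^[(r : ℕ)] a = v r := fun r => by
            rw [← h0]; exact pglue_iterate hinj hgl r
          refine Prod.ext ?_ ?_
          · show f'^[((Fin.last (mlen (insert a T) f' a)) : ℕ)] a = j
            have h1 : ((Fin.last (mlen (insert a T) f' a)) : ℕ) = m := by
              rw [Fin.val_last, hm]
            rw [h1]
            have h2 := hiter (Fin.last m)
            rw [Fin.val_last] at h2
            rw [h2]
            exact hlast
          · show (⟨mlen (insert a T) f' a, (vtraj (insert a T) f' a,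
              gres (insert a T) f' a)⟩ : Σ m : ℕ, (Fin (m+1) → Fin n) × (Fin n → Fin n))
              = ⟨m, (v, g)⟩
            refine Sigma.ext hm ?_
            refine prod_heq (by rw [hm]) ?_ ?_
            · exact (Fin.heq_fun_iff (by rw [hm])).mpr
                (fun r => hiter (Fin.cast (by rw [hm]) r))
            · funext x
              rw [gres]
              by_cases hx : ∃ r : Fin (mlen (insert a T) f' a + 1), f'^[(r : ℕ)] a = x
              · rw [if_pos hx]
                obtain ⟨r, hr⟩ := hx
                have hrm : (r : ℕ) < m + 1 := by
                  have := r.isLt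
                  omega
                have hxv : x ∈ Finset.image v Finset.univ := by
                  refine Finset.mem_image.mpr ⟨⟨(r : ℕ), hrm⟩, Finset.mem_univ _, ?_⟩
                  exact (hiter ⟨(r : ℕ), hrm⟩).symm.trans hr
                exact (hgc.1 x (fun hmem => (Finset.mem_sdiff.mp hmem).2 hxv)).symm
              · rw [if_neg hx]
                refine pglue_off (fun r0 hr0 => hx ⟨⟨((r0.castSucc : Fin (m+1)) : ℕ),
                  by have := (r0.castSucc : Fin (m+1)).isLt; omega⟩, ?_⟩)
                exact (hiter r0.castSucc).trans hr0
        · -- right inverse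
          intro f hf
          exact back_pglue (Finset.mem_filter.mp hf).2 ha
        · -- weights
          intro p hp
          obtain ⟨-, ⟨hinj, h0, hlast, hedges, hmid⟩, hgc⟩ := Finset.mem_filter.mp hp
          rw [← hlast]
          exact (fwd_wt hinj h0 ha hmid hgc).symm
    _ = Ynum E (insert a T) := by
        rw [Ynum_eq]
        exact Finset.sum_filter _ _
end Dev6g
section Dev5b
open Classical MvPolynomial
variable {n : ℕ} (E : Fin n → Fin n → Prop)

local notation "φ" => algebraMap (MvPolynomial (Fin n ⊕ Fin n) ℤ) (Kn n)

/-- The core polynomial identity. -/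
lemma keyPoly (hE : ∀ i, ¬ E i i) (T : Finset (Fin n)) (a : Fin n) (ha : a ∉ T) :
    (∑ j : Fin n, Pnum E T a j *
      (if j ∈ insert a T then X (Sum.inl j) else X (Sum.inr j)))
        = Ynum E (insert a T) :=
  keyPoly' T a ha

lemma lemmaA (hE : ∀ i, ¬ E i i) (T : Finset (Fin n)) (a : Fin n) (ha : a ∉ T) :
    (∑ j ∈ (insert a T)ᶜ, PP E T a j * XX j) + (∑ j ∈ insert a T, PP E T a j * AA j)
      = XX a * YY E (insert a T) := by
  have hD : φ (∏ t ∈ T, X (Sum.inr t)) ≠ (0 : Kn n) := by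
    apply phi_ne_zero
    exact Finset.prod_ne_zero_iff.mpr (fun t _ => MvPolynomial.X_ne_zero _)
  have step1 : (∑ j ∈ (insert a T)ᶜ, PP E T a j * XX j) +
      (∑ j ∈ insert a T, PP E T a j * AA j) =
      φ (∑ j : Fin n, Pnum E T a j *
        (if j ∈ insert a T then X (Sum.inl j) else X (Sum.inr j))) /
        φ (∏ t ∈ T, X (Sum.inr t)) := by
    have h2 : ∀ j ∈ (insert a T)ᶜ, PP E T a j * XX j =
        φ (Pnum E T a j * (if j ∈ insert a T then X (Sum.inl j) else X (Sum.inr j))) /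
          φ (∏ t ∈ T, X (Sum.inr t)) := by
      intro j hj
      rw [Finset.mem_compl] at hj
      rw [PP_eq_Pnum, if_neg hj, map_mul, div_mul_eq_mul_div]
      rfl
    have h1 : ∀ j ∈ insert a T, PP E T a j * AA j =
        φ (Pnum E T a j * (if j ∈ insert a T then X (Sum.inl j) else X (Sum.inr j))) /
          φ (∏ t ∈ T, X (Sum.inr t)) := by
      intro j hj
      rw [PP_eq_Pnum, if_pos hj, map_mul, div_mul_eq_mul_div]
      rfl
    rw [Finset.sum_congr rfl h2, Finset.sum_congr rfl h1, add_comm,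
      Finset.sum_add_sum_compl, map_sum, Finset.sum_div]
  rw [step1, keyPoly E hE T a ha, YY, Finset.prod_insert ha, prodXX_eq,
    ← mul_div_assoc, mul_div_mul_left _ _ (XX_ne_zero a)]
end Dev5b
section Final
open Classical MvPolynomial

theorem stmt10' (n : ℕ) (E : Fin n → Fin n → Prop) (hE : ∀ i, ¬ E i i)
    (S : Finset (Fin n)) (i : Fin n) (hi : i ∉ S) :
    ((∑ j ∈ (insert i S)ᶜ, PP E S i j * XX j) +
        (∑ j ∈ insert i S, PP E S i j * AA j)) / YY E (ominus E S i)
      ∈ Subring.closure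
        (Set.range (XX (n := n)) ∪ Set.range (AA (n := n)) ∪
          {y : Kn n | ∃ T ⊆ S, y = YY E T}) := by
  set 𝒢 := (Set.range (XX (n := n)) ∪ Set.range (AA (n := n)) ∪
      {y : Kn n | ∃ T ⊆ S, y = YY E T}) with h𝒢
  have hXmem : ∀ j : Fin n, XX j ∈ Subring.closure 𝒢 :=
    fun j => Subring.subset_closure (Or.inl (Or.inl ⟨j, rfl⟩))
  have hAmem : ∀ j : Fin n, AA j ∈ Subring.closure 𝒢 :=
    fun j => Subring.subset_closure (Or.inl (Or.inr ⟨j, rfl⟩))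
  have hPmem : ∀ T' : Finset (Fin n), T' ⊆ S → ∀ j : Fin n,
      PP E T' i j ∈ Subring.closure 𝒢 := by
    intro T' hT' j
    rw [PP]
    apply Subring.sum_mem
    intro m _
    apply Subring.sum_mem
    intro v _
    split_ifs with h
    · exact Subring.subset_closure (Or.inr ⟨T' \ Finset.image v Finset.univ,
        (Finset.sdiff_subset).trans hT', rfl⟩)
    · exact Subring.zero_mem _
  have hnum := lemmaA E hE S i hi
  rw [hnum]
  have hsplit : YY E (insert i S) = YY E (oplus E S i) * YY E (ominus E S i) := by
    rw [← oplus_union_ominus (E := E) (S := S) (i := i)]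
    exact YY_union _ _ oplus_disjoint_ominus oplus_cross
  rw [hsplit, ← mul_assoc, mul_div_assoc, div_self (YY_ne_zero E _), mul_one]
  have h2 := lemmaA E hE ((oplus E S i).erase i) i (by simp)
  rw [insert_oplus_erase] at h2
  rw [← h2]
  apply Subring.add_mem
  · apply Subring.sum_mem
    intro j _
    exact Subring.mul_mem _ (hPmem _ (oplus_erase_subset hi) j) (hXmem j)
  · apply Subring.sum_mem
    intro j _
    exact Subring.mul_mem _ (hPmem _ (oplus_erase_subset hi) j) (hAmem j)

end Final

/-- For `i ∉ S`, the rational function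
`(Σ_{j ∉ S∪{i}} P_S^{i,j} X_j + Σ_{j ∈ S∪{i}} P_S^{i,j} A_j) / Y_{S⊖i}` lies in the subring
of the ambient field generated by the `X_j`, the `A_j`, and the `Y_T` for `T ⊆ S`. -/
theorem stmt10 (n : ℕ) (E : Fin n → Fin n → Prop) (hE : ∀ i, ¬ E i i)
    (S : Finset (Fin n)) (i : Fin n) (hi : i ∉ S) :
    ((∑ j ∈ (insert i S)ᶜ, PP E S i j * XX j) +
        (∑ j ∈ insert i S, PP E S i j * AA j)) / YY E (ominus E S i)
      ∈ Subring.closure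
        (Set.range (XX (n := n)) ∪ Set.range (AA (n := n)) ∪
          {y : Kn n | ∃ T ⊆ S, y = YY E T}) :=
  stmt10' n E hE S i hi
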